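/- Let f : Fin n → ℝ be an injective function, let G be a connected simple graph on vertex set Fin n, and let u, v be two vertices of G. Suppose that the distance between u and v is not reconstructible from G with respect to f. Then there exists a connected partition S_1, …, S_k of Fin n which is a witness with respect to G and f, and such that u ∈ S_1 and v ∈ S_2. -/

import Mathlib

/-- The distance between `u` and `v` is reconstructible from `G` w.r.t. `f`. -/
def distRecon {n : ℕ} (f : Fin n → ℝ) (G : SimpleGraph (Fin n)) (u v : Fin n) : Prop :=
  ∀ g : Fin n → ℝ, Function.Injective g →
    (∀ i j, G.Adj i j → |g i - g j| = |f i - f j|) → |g u - g v| = |f u - f v|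

/-- `P` is a connected partition of the vertex set of `G` (blocks are the fibers of `P`). -/
def ConnPartition {V : Type*} (G : SimpleGraph V) {k : ℕ} (P : V → Fin k) : Prop :=
  Function.Surjective P ∧ ∀ i : Fin k, (SimpleGraph.induce (P ⁻¹' {i}) G).Connected

/-- The set of edges of `G` whose endpoints lie in two different blocks of `P`. -/
def crossSet {V : Type*} (G : SimpleGraph V) {k : ℕ} (P : V → Fin k) : Set (Sym2 V) :=
  {e | e ∈ G.edgeSet ∧ ¬ (e.map P).IsDiag}

/-- The connected partition `P` is a witness with respect to `G` and the embedding `g`: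
there are reals `F i j` with `F l l = 0` such that (i) at most half of the edges of `G` cross
between two different blocks, (ii) every crossing edge `a b` with `a` in block `i` and `b` in
block `j` has `g a - g b = F i j`, and (iii) around every closed walk the values of `F` along
consecutive blocks sum to `0`. -/
def IsWitness {V : Type*} (G : SimpleGraph V) (g : V → ℝ) {k : ℕ} (P : V → Fin k) : Prop :=
  ∃ F : Fin k → Fin k → ℝ, (∀ l, F l l = 0) ∧
    ((Nat.card (crossSet G P) : ℝ) ≤ (Nat.card G.edgeSet : ℝ) / 2) ∧
    (∀ a b, G.Adj a b → P a ≠ P b → g a - g b = F (P a) (P b)) ∧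
    (∀ (u : V) (w : G.Walk u u),
      (w.darts.map (fun d => F (P d.fst) (P d.snd))).sum = 0)

/-- If the distance `uv` is not reconstructible from a connected graph `G`, then there is a
connected partition of the vertex set which is a witness w.r.t. `G` and `f`, with `u` in the
first block and `v` in the second. -/
def sg {n : ℕ} (f g : Fin n → ℝ) (G : SimpleGraph (Fin n)) : SimpleGraph (Fin n) where
  Adj i j := G.Adj i j ∧ f i - f j = g i - g j
  symm := ⟨fun i j (h : G.Adj i j ∧ f i - f j = g i - g j) => ⟨h.1.symm, by linarith [h.2]⟩⟩
  loopless := ⟨fun i (h : G.Adj i i ∧ f i - f i = g i - g i) => G.loopless.irrefl i h.1⟩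

lemma dart_sum {V : Type*} {G : SimpleGraph V} (φ : V → ℝ) {a b : V} (w : G.Walk a b) :
    (w.darts.map (fun d => φ d.fst - φ d.snd)).sum = φ a - φ b := by
  induction w with
  | nil => simp
  | cons h p ih => rw [SimpleGraph.Walk.darts_cons]; simp only [List.map_cons, List.sum_cons, ih]; ring

lemma reach_induce {V : Type*} {G : SimpleGraph V} (s : Set V) :
    ∀ {a b : V} (p : G.Walk a b) (hs : ∀ x ∈ p.support, x ∈ s),
    (G.induce s).Reachable ⟨a, hs a p.start_mem_support⟩ ⟨b, hs b p.end_mem_support⟩ := by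
  intro a b p
  induction p with
  | nil => intro hs; exact SimpleGraph.Reachable.refl _
  | @cons a c b h p ih =>
      intro hs
      have hc : c ∈ s := hs c (by simp [SimpleGraph.Walk.support_cons])
      have ha : a ∈ s := hs a (by simp [SimpleGraph.Walk.support_cons])
      have step : (G.induce s).Adj ⟨a, ha⟩ ⟨c, hc⟩ := by
        simp only [SimpleGraph.comap_adj, Function.Embedding.coe_subtype]
        exact h
      have := ih (fun x hx => hs x (by simp [SimpleGraph.Walk.support_cons, hx]))
      exact step.reachable.trans this

lemma main {n : ℕ} (f : Fin n → ℝ) (hf : Function.Injective f)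
    (G : SimpleGraph (Fin n)) (u v : Fin n) (g : Fin n → ℝ)
    (hedge : ∀ i j, G.Adj i j → |g i - g j| = |f i - f j|)
    (hne : |g u - g v| ≠ |f u - f v|)
    (hhalf : ((G.edgeSet \ (sg f g G).edgeSet).ncard : ℝ) ≤ (G.edgeSet.ncard : ℝ) / 2) :
    ∃ (k : ℕ) (hk : 2 ≤ k) (P : Fin n → Fin k),
      ConnPartition G P ∧ IsWitness G f P ∧
      P u = ⟨0, Nat.lt_of_lt_of_le Nat.two_pos hk⟩ ∧ P v = ⟨1, Nat.lt_of_lt_of_le Nat.one_lt_two hk⟩ := by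
  classical
  set G' := sg f g G with hG'def
  have hG'le : ∀ i j, G'.Adj i j → G.Adj i j := fun i j h => h.1
  have dich : ∀ i j, G.Adj i j → ¬ G'.Adj i j → f i - f j = -(g i - g j) := by
    intro i j hij hnadj
    rcases abs_eq_abs.mp (hedge i j hij) with h1 | h1
    · exact absurd ⟨hij, h1.symm⟩ hnadj
    · linarith
  have hstep : ∀ i j, G'.Adj i j → f i - g i = f j - g j := fun i j h => by
    have := h.2; linarith
  have hwalk : ∀ {a b : Fin n}, G'.Walk a b → f a - g a = f b - g b := by
    intro a b p; induction p with
    | nil => rfl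
    | cons h _ ih => exact (hstep _ _ h).trans ih
  let c : G'.ConnectedComponent → ℝ :=
    SimpleGraph.ConnectedComponent.lift (fun x => f x - g x) (fun a b p _ => hwalk p)
  have hc : ∀ x, c (G'.connectedComponentMk x) = f x - g x := fun x => rfl
  have hmkc : ∀ {a b : Fin n}, G'.connectedComponentMk a = G'.connectedComponentMk b →
      f a - g a = f b - g b := by
    intro a b hab
    have := congrArg c hab
    simpa [hc] using this
  have : Fintype G'.ConnectedComponent := Fintype.ofFinite _
  set cu := G'.connectedComponentMk u with hcu
  set cv := G'.connectedComponentMk v with hcv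
  have hcucv : cu ≠ cv := by
    intro hEq
    have h1 : f u - g u = f v - g v := hmkc hEq
    exact hne (by rw [show g u - g v = f u - f v by linarith])
  set k := Fintype.card G'.ConnectedComponent with hkdef
  have hk : 2 ≤ k := Fintype.one_lt_card_iff_nontrivial.mpr ⟨⟨cu, cv, hcucv⟩⟩
  set z0 : Fin k := ⟨0, by omega⟩ with hz0
  set z1 : Fin k := ⟨1, by omega⟩ with hz1
  have hz01 : z0 ≠ z1 := by simp [hz0, hz1, Fin.ext_iff]
  set e0 : G'.ConnectedComponent ≃ Fin k := Fintype.equivFin _ with he0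
  set e1 : G'.ConnectedComponent ≃ Fin k := e0.trans (Equiv.swap (e0 cu) z0) with he1
  set a : Fin k := e1 cv with hadef
  have ha0 : a ≠ z0 := by
    have : e1 cu = z0 := by simp [he1, Equiv.swap_apply_left]
    intro hEq
    exact hcucv (e1.injective (by rw [this, ← hEq]))
  set e' : G'.ConnectedComponent ≃ Fin k := e1.trans (Equiv.swap a z1) with he'
  have heu : e' cu = z0 := by
    have h1 : e1 cu = z0 := by simp [he1, Equiv.swap_apply_left]
    simp [he', h1, Equiv.swap_apply_of_ne_of_ne (Ne.symm ha0) hz01]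
  have hev : e' cv = z1 := by simp [he', ← hadef, Equiv.swap_apply_left]
  set P : Fin n → Fin k := fun x => e' (G'.connectedComponentMk x) with hPdef
  have hPsymm : ∀ x, e'.symm (P x) = G'.connectedComponentMk x :=
    fun x => e'.symm_apply_apply _
  have hfib : ∀ i : Fin k, P ⁻¹' {i} = (e'.symm i).supp := by
    intro i
    ext x
    simp only [Set.mem_preimage, Set.mem_singleton_iff,
      SimpleGraph.ConnectedComponent.mem_supp_iff, hPdef]
    exact ⟨fun h => by rw [← h, e'.symm_apply_apply], fun h => by rw [h, e'.apply_symm_apply]⟩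
  refine ⟨k, hk, P, ⟨?_, ?_⟩, ?_, ?_, ?_⟩
  · -- surjective
    intro i
    obtain ⟨x, hx⟩ := (e'.symm i).exists_rep
    refine ⟨x, ?_⟩
    show e' (G'.connectedComponentMk x) = i
    rw [show G'.connectedComponentMk x = e'.symm i from hx, e'.apply_symm_apply]
  · -- connected fibers
    intro i
    rw [hfib i]
    obtain ⟨x0, hx0⟩ := (e'.symm i).exists_rep
    rw [SimpleGraph.connected_iff]
    refine ⟨?_, ⟨⟨x0, by rw [SimpleGraph.ConnectedComponent.mem_supp_iff]; exact hx0⟩⟩⟩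
    · rintro ⟨aa, haa⟩ ⟨bb, hbb⟩
      rw [SimpleGraph.ConnectedComponent.mem_supp_iff] at haa hbb
      have hr : G'.Reachable aa bb :=
        SimpleGraph.ConnectedComponent.exact (haa.trans hbb.symm)
      obtain ⟨p⟩ := hr
      have hsupp : ∀ x ∈ p.support, x ∈ (e'.symm i).supp := by
        intro x hx
        rw [SimpleGraph.ConnectedComponent.mem_supp_iff]
        have : G'.Reachable aa x := ⟨p.takeUntil x hx⟩
        rw [← haa]
        exact (SimpleGraph.ConnectedComponent.sound this).symm
      have hreach := reach_induce (G := G') (e'.symm i).supp p hsupp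
      have hle : G'.induce (e'.symm i).supp ≤ G.induce (e'.symm i).supp := by
        rintro ⟨x, hx⟩ ⟨y, hy⟩ hxy
        simp only [SimpleGraph.comap_adj, Function.Embedding.coe_subtype] at hxy ⊢
        exact hG'le _ _ hxy
      exact SimpleGraph.Reachable.mono hle hreach
  · -- witness
    refine ⟨fun i j => (c (e'.symm i) - c (e'.symm j)) / 2, fun l => by ring, ?_, ?_, ?_⟩
    · -- cardinality
      have hsub : crossSet G P ⊆ G.edgeSet \ G'.edgeSet := by
        rintro e ⟨he1, he2⟩
        refine ⟨he1, fun hmem => he2 ?_⟩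
        induction e using Sym2.ind with
        | _ x y =>
          rw [SimpleGraph.mem_edgeSet] at hmem
          have : P x = P y :=
            congrArg e' (SimpleGraph.ConnectedComponent.sound hmem.reachable)
          simp [Sym2.map_pair_eq, this]
      calc (Nat.card (crossSet G P) : ℝ)
          = ((crossSet G P).ncard : ℝ) := by rw [Nat.card_coe_set_eq]
        _ ≤ ((G.edgeSet \ G'.edgeSet).ncard : ℝ) := by
            exact_mod_cast Set.ncard_le_ncard hsub (Set.toFinite _)
        _ ≤ (G.edgeSet.ncard : ℝ) / 2 := hhalf
        _ = (Nat.card G.edgeSet : ℝ) / 2 := by rw [Nat.card_coe_set_eq]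
    · -- crossing edges
      intro x y hadj hPxy
      have hmk : G'.connectedComponentMk x ≠ G'.connectedComponentMk y :=
        fun hEq => hPxy (congrArg e' hEq)
      have hnadj : ¬ G'.Adj x y := fun hA => hmk (SimpleGraph.ConnectedComponent.sound hA.reachable)
      have hD := dich x y hadj hnadj
      show f x - f y = (c (e'.symm (P x)) - c (e'.symm (P y))) / 2
      rw [hPsymm, hPsymm, hc, hc]
      linarith
    · -- closed walks
      intro w walk
      have hfun : (fun d : G.Dart =>
          (c (e'.symm (P d.fst)) - c (e'.symm (P d.snd))) / 2) =
          fun d : G.Dart => (fun x => c (G'.connectedComponentMk x) / 2) d.fst -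
            (fun x => c (G'.connectedComponentMk x) / 2) d.snd := by
        funext d
        rw [hPsymm, hPsymm]
        ring
      rw [hfun]
      exact (dart_sum (fun x => c (G'.connectedComponentMk x) / 2) walk).trans (sub_self _)
  · rw [hPdef]; exact heu
  · rw [hPdef]; exact hev

theorem stmt4 {n : ℕ} (f : Fin n → ℝ) (hf : Function.Injective f)
    (G : SimpleGraph (Fin n)) (hG : G.Connected) (u v : Fin n)
    (h : ¬ distRecon f G u v) :
    ∃ (k : ℕ) (hk : 2 ≤ k) (P : Fin n → Fin k),
      ConnPartition G P ∧ IsWitness G f P ∧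
      P u = ⟨0, by omega⟩ ∧ P v = ⟨1, by omega⟩ := by
  classical
  unfold distRecon at h
  push_neg at h
  obtain ⟨g, hg, hedge, hne⟩ := h
  set A := (sg f g G).edgeSet with hA
  set B := (sg f (fun x => -g x) G).edgeSet with hB
  have hedge' : ∀ i j, G.Adj i j → |(-g i) - (-g j)| = |f i - f j| := by
    intro i j hij
    rw [show (-g i) - (-g j) = -(g i - g j) by ring, abs_neg]
    exact hedge i j hij
  have hAE : A ⊆ G.edgeSet := by
    intro e he
    induction e using Sym2.ind with
    | _ x y => exact G.mem_edgeSet.mpr ((sg f g G).mem_edgeSet.mp he).1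
  have hBE : B ⊆ G.edgeSet := by
    intro e he
    induction e using Sym2.ind with
    | _ x y => exact G.mem_edgeSet.mpr ((sg f (fun x => -g x) G).mem_edgeSet.mp he).1
  have hAB : ∀ e, e ∈ A → e ∈ B → False := by
    intro e heA heB
    induction e using Sym2.ind with
    | _ x y =>
      obtain ⟨hadj, h1⟩ := (sg f g G).mem_edgeSet.mp heA
      obtain ⟨_, h2⟩ := (sg f (fun x => -g x) G).mem_edgeSet.mp heB
      have h2' : f x - f y = -g x - (-g y) := h2
      exact hadj.ne (hg (by linarith))
  have hdiffA : G.edgeSet \ A = B := by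
    ext e
    induction e using Sym2.ind with
    | _ x y =>
      simp only [Set.mem_diff, SimpleGraph.mem_edgeSet]
      constructor
      · rintro ⟨hadj, hnA⟩
        rcases abs_eq_abs.mp (hedge x y hadj) with h1 | h1
        · exact absurd ((sg f g G).mem_edgeSet.mpr ⟨hadj, h1.symm⟩) hnA
        · exact (sg f (fun x => -g x) G).mem_edgeSet.mpr ⟨hadj, show f x - f y = -g x - (-g y) by linarith⟩
      · intro hB'
        have hadj := ((sg f (fun x => -g x) G).mem_edgeSet.mp hB').1
        exact ⟨hadj, fun hA' => hAB _ hA' hB'⟩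
  have hdiffB : G.edgeSet \ B = A := by
    ext e
    induction e using Sym2.ind with
    | _ x y =>
      simp only [Set.mem_diff, SimpleGraph.mem_edgeSet]
      constructor
      · rintro ⟨hadj, hnB⟩
        rcases abs_eq_abs.mp (hedge x y hadj) with h1 | h1
        · exact (sg f g G).mem_edgeSet.mpr ⟨hadj, h1.symm⟩
        · exact absurd ((sg f (fun x => -g x) G).mem_edgeSet.mpr ⟨hadj, show f x - f y = -g x - (-g y) by linarith⟩) hnB
      · intro hA'
        have hadj := ((sg f g G).mem_edgeSet.mp hA').1
        exact ⟨hadj, fun hB' => hAB _ hA' hB'⟩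
  have hsum : B.ncard + A.ncard = G.edgeSet.ncard := by
    rw [← hdiffA]
    exact Set.ncard_diff_add_ncard_of_subset hAE (Set.toFinite _)
  have hsumR : (B.ncard : ℝ) + (A.ncard : ℝ) = (G.edgeSet.ncard : ℝ) := by
    exact_mod_cast hsum
  by_cases hcase : B.ncard ≤ A.ncard
  · have hhalf : ((G.edgeSet \ A).ncard : ℝ) ≤ (G.edgeSet.ncard : ℝ) / 2 := by
      rw [hdiffA]
      have : (B.ncard : ℝ) ≤ (A.ncard : ℝ) := by exact_mod_cast hcase
      linarith
    exact main f hf G u v g hedge hne hhalf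
  · have hcase' : A.ncard ≤ B.ncard := le_of_not_ge hcase
    have hhalf : ((G.edgeSet \ B).ncard : ℝ) ≤ (G.edgeSet.ncard : ℝ) / 2 := by
      rw [hdiffB]
      have : (A.ncard : ℝ) ≤ (B.ncard : ℝ) := by exact_mod_cast hcase'
      linarith
    have hne' : |(-g u) - (-g v)| ≠ |f u - f v| := by
      rw [show (-g u) - (-g v) = -(g u - g v) by ring, abs_neg]
      exact hne
    exact main f hf G u v (fun x => -g x) hedge' hne' hhalf
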